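/- arXiv:2404.11991 — 2 statements merged into one kernel-verified Lean document; each statement's English description precedes it below -/
import Mathlib

section
/- For the Grushin distance d on ℝ^N × ℝ^l and any b > 0, away from the set {x̃ = 0} ∪ {z̃ = 0} one has Δ_γ d(z̃,0)^{-b} = b(b - N - (1+γ)l + 2) (1/(1+γ)²) |x̃|^{2γ} d(z̃,0)^{-b-2-2γ}, where Δ_γ = Δ_{x̃} + |x̃|^{2γ} Δ_{ỹ}. In particular, for b = N + (1+γ)l - 2 the function d(z̃,0)^{-b} is Δ_γ-harmonic away from the degenerate set. -/
open MeasureTheory Real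

noncomputable section

variable {N l : ℕ}

/-- squared Euclidean norm -/
def nsq {n : ℕ} (x : Fin n → ℝ) : ℝ := ∑ i, x i ^ 2

/-- partial derivative in the `i`-th `x` direction -/
def pdx (u : (Fin N → ℝ) × (Fin l → ℝ) → ℝ) (i : Fin N)
    (z : (Fin N → ℝ) × (Fin l → ℝ)) : ℝ :=
  deriv (fun t => u (Function.update z.1 i t, z.2)) (z.1 i)

/-- partial derivative in the `j`-th `y` direction -/
def pdy (u : (Fin N → ℝ) × (Fin l → ℝ) → ℝ) (j : Fin l)
    (z : (Fin N → ℝ) × (Fin l → ℝ)) : ℝ :=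
  deriv (fun t => u (z.1, Function.update z.2 j t)) (z.2 j)

/-- Grushin operator `Δ_γ u = Δ_x u + |x|^{2γ} Δ_y u` -/
def grushinLap (γ : ℝ) (u : (Fin N → ℝ) × (Fin l → ℝ) → ℝ)
    (z : (Fin N → ℝ) × (Fin l → ℝ)) : ℝ :=
  (∑ i, pdx (pdx u i) i z) + (nsq z.1) ^ γ * ∑ j, pdy (pdy u j) j z

/-- the Grushin distance to the origin:
`d(z,0) = ((1/(1+γ)²)|x|^{2+2γ} + |y|²)^{1/(2+2γ)}` (note `|x|^{2+2γ} = (nsq x)^{1+γ}`). -/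
def gd (γ : ℝ) (z : (Fin N → ℝ) × (Fin l → ℝ)) : ℝ :=
  ((1 / (1 + γ) ^ 2) * (nsq z.1) ^ (1 + γ) + nsq z.2) ^ (1 / (2 + 2 * γ))

/-- the Grushin inversion `x̃ = x/d², ỹ = y/d^{2+2γ}` -/
def ginv (γ : ℝ) (z : (Fin N → ℝ) × (Fin l → ℝ)) : (Fin N → ℝ) × (Fin l → ℝ) :=
  (fun i => z.1 i / gd γ z ^ 2, fun j => z.2 j / gd γ z ^ (2 + 2 * γ))

/-- divergence of a vector field on `ℝ^N × ℝ^l` -/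
def gdiv (X : (Fin N → ℝ) × (Fin l → ℝ) → (Fin N → ℝ) × (Fin l → ℝ))
    (z : (Fin N → ℝ) × (Fin l → ℝ)) : ℝ :=
  (∑ i, pdx (fun w => (X w).1 i) i z) + ∑ j, pdy (fun w => (X w).2 j) j z

/-- Euclidean dot product on `ℝ^N × ℝ^l` -/
def gdot (v w : (Fin N → ℝ) × (Fin l → ℝ)) : ℝ :=
  (∑ i, v.1 i * w.1 i) + ∑ j, v.2 j * w.2 j

/-! ### auxiliary lemmas -/

lemma nsq_nonneg' {n : ℕ} (x : Fin n → ℝ) : 0 ≤ nsq x :=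
  Finset.sum_nonneg fun i _ => sq_nonneg _

lemma sq_le_nsq {n : ℕ} (x : Fin n → ℝ) (i : Fin n) : x i ^ 2 ≤ nsq x :=
  Finset.single_le_sum (fun j _ => sq_nonneg (x j)) (Finset.mem_univ i)

lemma nsq_pos {n : ℕ} {x : Fin n → ℝ} (hx : x ≠ 0) : 0 < nsq x := by
  obtain ⟨i, hi⟩ := Function.ne_iff.mp hx
  exact lt_of_lt_of_le (pow_pos (abs_pos.mpr hi) 2 |>.trans_le (by rw [sq_abs])) (sq_le_nsq x i)

lemma nsq_update {n : ℕ} (x : Fin n → ℝ) (i : Fin n) (t : ℝ) :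
    nsq (Function.update x i t) = nsq x - x i ^ 2 + t ^ 2 := by
  have h : ∀ j, (Function.update x i t j) ^ 2
      = x j ^ 2 + (if j = i then t ^ 2 - x i ^ 2 else 0) := by
    intro j
    by_cases h : j = i
    · subst h; simp
    · simp [h, Function.update_of_ne h]
  simp only [nsq, h, Finset.sum_add_distrib, Finset.sum_ite_eq' Finset.univ i,
    Finset.mem_univ, if_true]
  ring

lemma Spos (γ R : ℝ) (hγ : 0 ≤ γ) (hR : 0 ≤ R) (v : ℝ) (hv : 0 < v) :
    0 < (1 / (1 + γ) ^ 2) * v ^ (1 + γ) + R := by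
  have h1 : (0:ℝ) < 1 + γ := by linarith
  have := rpow_pos_of_pos hv (1 + γ)
  have hc : (0:ℝ) < 1 / (1 + γ) ^ 2 := by positivity
  nlinarith [mul_pos hc this]

lemma hderiv_x (γ b Q R : ℝ) (hγ : 0 ≤ γ) (hR : 0 ≤ R) (s : ℝ) (hs : 0 < Q + s ^ 2) :
    HasDerivAt (fun t => ((1 / (1 + γ) ^ 2) * (Q + t ^ 2) ^ (1 + γ) + R) ^ (-b / (2 + 2 * γ)))
      ((2 * (-b / (2 + 2 * γ)) * (1 / (1 + γ) ^ 2) * (1 + γ)) *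
        (s * ((Q + s ^ 2) ^ γ *
          ((1 / (1 + γ) ^ 2) * (Q + s ^ 2) ^ (1 + γ) + R) ^ (-b / (2 + 2 * γ) - 1)))) s := by
  have h1 : HasDerivAt (fun t : ℝ => Q + t ^ 2) (2 * s) s := by
    simpa using (hasDerivAt_pow 2 s).const_add Q
  have h2 := h1.rpow_const (p := 1 + γ) (Or.inl hs.ne')
  have h3 := (h2.const_mul (1 / (1 + γ) ^ 2)).add_const R
  have hS := Spos γ R hγ hR _ hs
  have h4 := h3.rpow_const (p := -b / (2 + 2 * γ)) (Or.inl hS.ne')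
  have he : (1:ℝ) + γ - 1 = γ := by ring
  rw [he] at h4
  convert h4 using 1
  ring

lemma hderiv_x2 (γ b Q R : ℝ) (hγ : 0 ≤ γ) (hR : 0 ≤ R) (t : ℝ) (ht : 0 < Q + t ^ 2) :
    HasDerivAt (fun s => (2 * (-b / (2 + 2 * γ)) * (1 / (1 + γ) ^ 2) * (1 + γ)) *
        (s * ((Q + s ^ 2) ^ γ *
          ((1 / (1 + γ) ^ 2) * (Q + s ^ 2) ^ (1 + γ) + R) ^ (-b / (2 + 2 * γ) - 1))))
      ((2 * (-b / (2 + 2 * γ)) * (1 / (1 + γ) ^ 2) * (1 + γ)) *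
        ((Q + t ^ 2) ^ γ *
            ((1 / (1 + γ) ^ 2) * (Q + t ^ 2) ^ (1 + γ) + R) ^ (-b / (2 + 2 * γ) - 1)
          + (2 * γ * (Q + t ^ 2) ^ (γ - 1) *
              ((1 / (1 + γ) ^ 2) * (Q + t ^ 2) ^ (1 + γ) + R) ^ (-b / (2 + 2 * γ) - 1)) * t ^ 2
          + (2 * (-b / (2 + 2 * γ) - 1) * (1 / (1 + γ) ^ 2) * (1 + γ) *
              ((Q + t ^ 2) ^ γ * (Q + t ^ 2) ^ γ) *
              ((1 / (1 + γ) ^ 2) * (Q + t ^ 2) ^ (1 + γ) + R) ^ (-b / (2 + 2 * γ) - 1 - 1))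
            * t ^ 2)) t := by
  have h1 : HasDerivAt (fun s : ℝ => Q + s ^ 2) (2 * t) t := by
    simpa using (hasDerivAt_pow 2 t).const_add Q
  have hA := h1.rpow_const (p := γ) (Or.inl ht.ne')
  have h2 := h1.rpow_const (p := 1 + γ) (Or.inl ht.ne')
  have h3 := (h2.const_mul (1 / (1 + γ) ^ 2)).add_const R
  have hS := Spos γ R hγ hR _ ht
  have hB := h3.rpow_const (p := -b / (2 + 2 * γ) - 1) (Or.inl hS.ne')
  have he : (1:ℝ) + γ - 1 = γ := by ring
  rw [he] at hB
  have hG := ((hasDerivAt_id t).mul (hA.mul hB)).const_mul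
      (2 * (-b / (2 + 2 * γ)) * (1 / (1 + γ) ^ 2) * (1 + γ))
  simp only [id_eq, Pi.mul_apply] at hG
  refine hG.congr_deriv ?_
  ring

lemma deriv2_x (γ b Q R : ℝ) (hγ : 0 ≤ γ) (hR : 0 ≤ R) (t : ℝ) (ht : 0 < Q + t ^ 2) :
    deriv (deriv (fun s =>
        ((1 / (1 + γ) ^ 2) * (Q + s ^ 2) ^ (1 + γ) + R) ^ (-b / (2 + 2 * γ)))) t
      = (2 * (-b / (2 + 2 * γ)) * (1 / (1 + γ) ^ 2) * (1 + γ)) *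
        ((Q + t ^ 2) ^ γ *
            ((1 / (1 + γ) ^ 2) * (Q + t ^ 2) ^ (1 + γ) + R) ^ (-b / (2 + 2 * γ) - 1)
          + (2 * γ * (Q + t ^ 2) ^ (γ - 1) *
              ((1 / (1 + γ) ^ 2) * (Q + t ^ 2) ^ (1 + γ) + R) ^ (-b / (2 + 2 * γ) - 1)) * t ^ 2
          + (2 * (-b / (2 + 2 * γ) - 1) * (1 / (1 + γ) ^ 2) * (1 + γ) *
              ((Q + t ^ 2) ^ γ * (Q + t ^ 2) ^ γ) *
              ((1 / (1 + γ) ^ 2) * (Q + t ^ 2) ^ (1 + γ) + R) ^ (-b / (2 + 2 * γ) - 1 - 1))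
            * t ^ 2) := by
  have hopen : IsOpen {s : ℝ | 0 < Q + s ^ 2} :=
    isOpen_lt continuous_const (continuous_const.add (continuous_pow 2))
  have hev : deriv (fun s =>
        ((1 / (1 + γ) ^ 2) * (Q + s ^ 2) ^ (1 + γ) + R) ^ (-b / (2 + 2 * γ)))
      =ᶠ[nhds t] fun s => (2 * (-b / (2 + 2 * γ)) * (1 / (1 + γ) ^ 2) * (1 + γ)) *
        (s * ((Q + s ^ 2) ^ γ *
          ((1 / (1 + γ) ^ 2) * (Q + s ^ 2) ^ (1 + γ) + R) ^ (-b / (2 + 2 * γ) - 1))) := by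
    filter_upwards [hopen.mem_nhds ht] with s hs
    exact (hderiv_x γ b Q R hγ hR s hs).deriv
  rw [hev.deriv_eq]
  exact (hderiv_x2 γ b Q R hγ hR t ht).deriv

lemma deriv2_y (p B : ℝ) (hB : 0 < B) (t : ℝ) :
    deriv (deriv (fun s => (B + s ^ 2) ^ p)) t
      = 2 * p * ((B + t ^ 2) ^ (p - 1)
          + (2 * (p - 1) * (B + t ^ 2) ^ (p - 1 - 1)) * t ^ 2) := by
  have hd : ∀ s : ℝ, HasDerivAt (fun s : ℝ => (B + s ^ 2) ^ p)
      (2 * p * (s * (B + s ^ 2) ^ (p - 1))) s := by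
    intro s
    have h1 : HasDerivAt (fun s : ℝ => B + s ^ 2) (2 * s) s := by
      simpa using (hasDerivAt_pow 2 s).const_add B
    have hpos : (0:ℝ) < B + s ^ 2 := by positivity
    have h2 := h1.rpow_const (p := p) (Or.inl hpos.ne')
    convert h2 using 1
    ring
  have hde : deriv (fun s : ℝ => (B + s ^ 2) ^ p)
      = fun s => 2 * p * (s * (B + s ^ 2) ^ (p - 1)) := funext fun s => (hd s).deriv
  rw [hde]
  have h1 : HasDerivAt (fun s : ℝ => B + s ^ 2) (2 * t) t := by
    simpa using (hasDerivAt_pow 2 t).const_add B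
  have hpos : (0:ℝ) < B + t ^ 2 := by positivity
  have hB2 := h1.rpow_const (p := p - 1) (Or.inl hpos.ne')
  have hG := ((hasDerivAt_id t).mul hB2).const_mul (2 * p)
  simp only [id_eq, Pi.mul_apply] at hG
  rw [hG.deriv]
  ring

set_option maxHeartbeats 2000000 in
/-- `Δ_γ d^{-b} = b(b - N - (1+γ)l + 2)(1/(1+γ)²)|x̃|^{2γ} d^{-b-2-2γ}`
away from `{x̃ = 0} ∪ {z̃ = 0}`; in particular `d^{-b}` is `Δ_γ`-harmonic there for
`b = N + (1+γ)l - 2`. -/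
theorem grushinLap_gd_rpow_neg (γ b : ℝ) (hγ : 0 ≤ γ) (hb : 0 < b)
    (z : (Fin N → ℝ) × (Fin l → ℝ)) (hx : z.1 ≠ 0) :
    grushinLap γ (fun w => gd γ w ^ (-b)) z
        = b * (b - N - (1 + γ) * l + 2) * (1 / (1 + γ) ^ 2) * (nsq z.1) ^ γ *
            gd γ z ^ (-b - 2 - 2 * γ) ∧
    (b = N + (1 + γ) * l - 2 → grushinLap γ (fun w => gd γ w ^ (-b)) z = 0) := by
  have hγ1 : (0:ℝ) < 1 + γ := by linarith
  have h2γ : (0:ℝ) < 2 + 2 * γ := by linarith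
  have hX : 0 < nsq z.1 := nsq_pos hx
  have hR : 0 ≤ nsq z.2 := nsq_nonneg' _
  have hS : 0 < (1 / (1 + γ) ^ 2) * (nsq z.1) ^ (1 + γ) + nsq z.2 := Spos γ (nsq z.2) hγ hR _ hX
  -- the x-direction second derivatives
  have key_x : ∀ i, pdx (pdx (fun w => gd γ w ^ (-b)) i) i z
      = (2 * (-b / (2 + 2 * γ)) * (1 / (1 + γ) ^ 2) * (1 + γ)) * ((nsq z.1) ^ γ *
            ((1 / (1 + γ) ^ 2) * (nsq z.1) ^ (1 + γ) + nsq z.2) ^ (-b / (2 + 2 * γ) - 1))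
        + ((2 * (-b / (2 + 2 * γ)) * (1 / (1 + γ) ^ 2) * (1 + γ)) *
            (2 * γ * (nsq z.1) ^ (γ - 1) *
              ((1 / (1 + γ) ^ 2) * (nsq z.1) ^ (1 + γ) + nsq z.2) ^ (-b / (2 + 2 * γ) - 1)
            + 2 * (-b / (2 + 2 * γ) - 1) * (1 / (1 + γ) ^ 2) * (1 + γ) *
              ((nsq z.1) ^ γ * (nsq z.1) ^ γ) *
              ((1 / (1 + γ) ^ 2) * (nsq z.1) ^ (1 + γ) + nsq z.2) ^ (-b / (2 + 2 * γ) - 1 - 1)))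
            * z.1 i ^ 2 := by
    intro i
    have hfun : ∀ s : ℝ, gd γ (Function.update z.1 i s, z.2) ^ (-b)
        = ((1 / (1 + γ) ^ 2) * ((nsq z.1 - z.1 i ^ 2) + s ^ 2) ^ (1 + γ) + nsq z.2)
            ^ (-b / (2 + 2 * γ)) := by
      intro s
      have hbase : 0 ≤ (1 / (1 + γ) ^ 2) * ((nsq z.1 - z.1 i ^ 2) + s ^ 2) ^ (1 + γ) + nsq z.2 := by
        have : (0:ℝ) ≤ ((nsq z.1 - z.1 i ^ 2) + s ^ 2) ^ (1 + γ) := rpow_nonneg (by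
          nlinarith [sq_le_nsq z.1 i, sq_nonneg s]) _
        positivity
      simp only [gd, nsq_update]
      rw [← Real.rpow_mul hbase]
      congr 1
      ring
    have hpd : (fun t => pdx (fun w => gd γ w ^ (-b)) i (Function.update z.1 i t, z.2))
        = deriv (fun s => ((1 / (1 + γ) ^ 2) * ((nsq z.1 - z.1 i ^ 2) + s ^ 2) ^ (1 + γ)
            + nsq z.2) ^ (-b / (2 + 2 * γ))) := by
      funext t
      show deriv (fun s => gd γ (Function.update (Function.update z.1 i t) i s, z.2) ^ (-b))
          ((Function.update z.1 i t) i) = _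
      simp only [Function.update_idem, Function.update_self]
      congr 1
      funext s
      exact hfun s
    have hgoal : pdx (pdx (fun w => gd γ w ^ (-b)) i) i z
        = deriv (deriv (fun s => ((1 / (1 + γ) ^ 2) * ((nsq z.1 - z.1 i ^ 2) + s ^ 2) ^ (1 + γ)
            + nsq z.2) ^ (-b / (2 + 2 * γ)))) (z.1 i) := by
      show deriv (fun t => pdx (fun w => gd γ w ^ (-b)) i (Function.update z.1 i t, z.2)) (z.1 i) = _
      rw [hpd]
    have ht : 0 < (nsq z.1 - z.1 i ^ 2) + z.1 i ^ 2 := by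
      have : nsq z.1 - z.1 i ^ 2 + z.1 i ^ 2 = nsq z.1 := by ring
      rw [this]; exact hX
    have := deriv2_x γ b (nsq z.1 - z.1 i ^ 2) (nsq z.2) hγ hR (z.1 i) ht
    rw [show nsq z.1 - z.1 i ^ 2 + z.1 i ^ 2 = nsq z.1 from by ring] at this
    rw [hgoal, this]
    ring
  -- the y-direction second derivatives
  have key_y : ∀ j, pdy (pdy (fun w => gd γ w ^ (-b)) j) j z
      = 2 * (-b / (2 + 2 * γ)) *
          ((1 / (1 + γ) ^ 2) * (nsq z.1) ^ (1 + γ) + nsq z.2) ^ (-b / (2 + 2 * γ) - 1)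
        + (2 * (-b / (2 + 2 * γ)) * (2 * (-b / (2 + 2 * γ) - 1) *
            ((1 / (1 + γ) ^ 2) * (nsq z.1) ^ (1 + γ) + nsq z.2) ^ (-b / (2 + 2 * γ) - 1 - 1)))
            * z.2 j ^ 2 := by
    intro j
    have hRj : 0 ≤ nsq z.2 - z.2 j ^ 2 := sub_nonneg.mpr (sq_le_nsq z.2 j)
    have hB : 0 < (1 / (1 + γ) ^ 2) * (nsq z.1) ^ (1 + γ) + (nsq z.2 - z.2 j ^ 2) :=
      Spos γ _ hγ hRj _ hX
    have hfun : ∀ s : ℝ, gd γ (z.1, Function.update z.2 j s) ^ (-b)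
        = (((1 / (1 + γ) ^ 2) * (nsq z.1) ^ (1 + γ) + (nsq z.2 - z.2 j ^ 2)) + s ^ 2)
            ^ (-b / (2 + 2 * γ)) := by
      intro s
      have hbase : 0 ≤ (1 / (1 + γ) ^ 2) * (nsq z.1) ^ (1 + γ)
          + (nsq z.2 - z.2 j ^ 2 + s ^ 2) := by
        have h1 : (0:ℝ) ≤ (nsq z.1) ^ (1 + γ) := rpow_nonneg (nsq_nonneg' _) _
        have h2 : (0:ℝ) ≤ 1 / (1 + γ) ^ 2 := by positivity
        nlinarith [sq_nonneg s]
      simp only [gd, nsq_update]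
      rw [← Real.rpow_mul hbase]
      congr 1
      · ring
      · ring
    have hpd : (fun t => pdy (fun w => gd γ w ^ (-b)) j (z.1, Function.update z.2 j t))
        = deriv (fun s => (((1 / (1 + γ) ^ 2) * (nsq z.1) ^ (1 + γ)
            + (nsq z.2 - z.2 j ^ 2)) + s ^ 2) ^ (-b / (2 + 2 * γ))) := by
      funext t
      show deriv (fun s => gd γ (z.1, Function.update (Function.update z.2 j t) j s) ^ (-b))
          ((Function.update z.2 j t) j) = _
      simp only [Function.update_idem, Function.update_self]
      congr 1
      funext s
      exact hfun s
    have hgoal : pdy (pdy (fun w => gd γ w ^ (-b)) j) j z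
        = deriv (deriv (fun s => (((1 / (1 + γ) ^ 2) * (nsq z.1) ^ (1 + γ)
            + (nsq z.2 - z.2 j ^ 2)) + s ^ 2) ^ (-b / (2 + 2 * γ)))) (z.2 j) := by
      show deriv (fun t => pdy (fun w => gd γ w ^ (-b)) j (z.1, Function.update z.2 j t)) (z.2 j) = _
      rw [hpd]
    have := deriv2_y (-b / (2 + 2 * γ)) _ hB (z.2 j)
    rw [show (1 / (1 + γ) ^ 2) * (nsq z.1) ^ (1 + γ) + (nsq z.2 - z.2 j ^ 2) + z.2 j ^ 2
        = (1 / (1 + γ) ^ 2) * (nsq z.1) ^ (1 + γ) + nsq z.2 from by ring] at this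
    rw [hgoal, this]
    ring
  -- summation helper
  have hsum_sq : ∀ (n : ℕ) (x : Fin n → ℝ) (P Q : ℝ),
      ∑ i, (P + Q * x i ^ 2) = n * P + Q * nsq x := by
    intro n x P Q
    rw [Finset.sum_add_distrib, Finset.sum_const, ← Finset.mul_sum]
    simp [nsq, nsmul_eq_mul, Finset.card_univ]
  have hmain : grushinLap γ (fun w => gd γ w ^ (-b)) z
      = b * (b - N - (1 + γ) * l + 2) * (1 / (1 + γ) ^ 2) * (nsq z.1) ^ γ *
          gd γ z ^ (-b - 2 - 2 * γ) := by
    have hgd : gd γ z ^ (-b - 2 - 2 * γ)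
        = ((1 / (1 + γ) ^ 2) * (nsq z.1) ^ (1 + γ) + nsq z.2) ^ (-b / (2 + 2 * γ) - 1) := by
      simp only [gd]
      rw [← Real.rpow_mul hS.le]
      congr 1
      field_simp
      ring
    simp only [grushinLap]
    rw [Finset.sum_congr rfl fun i _ => key_x i, Finset.sum_congr rfl fun j _ => key_y j,
      hsum_sq, hsum_sq, hgd]
    rw [Real.rpow_sub hS (-b / (2 + 2 * γ) - 1) 1, Real.rpow_sub hX γ 1,
      Real.rpow_add hX 1 γ]
    simp only [Real.rpow_one]
    rw [Real.rpow_add hX 1 γ, Real.rpow_one] at hS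
    have h1ne : (1 + γ) ≠ 0 := hγ1.ne'
    have h2ne : (2 + 2 * γ) ≠ 0 := h2γ.ne'
    set W := (1 / (1 + γ) ^ 2 * (nsq z.1 * nsq z.1 ^ γ) + nsq z.2) ^ (-b / (2 + 2 * γ) - 1) with hW
    set A := nsq z.1 ^ γ with hA
    set X := nsq z.1 with hXd
    set R := nsq z.2 with hRd
    have hSne := hS.ne'
    have hXne := hX.ne'
    have hD : A * X + γ * R * 2 + γ ^ 2 * R + R ≠ 0 := by
      rw [show A * X + γ * R * 2 + γ ^ 2 * R + R = (1 + γ) ^ 2 * (1 / (1 + γ) ^ 2 * (X * A) + R) by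
        rw [mul_add, ← mul_assoc, mul_one_div_cancel (pow_ne_zero 2 h1ne), one_mul]; ring]
      exact (mul_pos (pow_pos hγ1 2) hS).ne'
    field_simp
    linear_combination A * W * (b + 2 + 2 * γ) * mul_inv_cancel₀ hD
  exact ⟨hmain, fun h => by rw [hmain, h]; ring⟩
end
end

section
/- Invariance of the critical Lebesgue norm under Kelvin transform: let N_γ = N + (1+γ)l, 2*_γ = 2N_γ/(N_γ-2), and w(z̃) = d(z,0)^{N_γ-2}u(z) with z the Grushin inversion of z̃. Then ∫_{ℝ^{N+l}} |w(z̃)|^{2*_γ} dz̃ = ∫_{ℝ^{N+l}} |u(z)|^{2*_γ} dz, since the Jacobian of the inversion map equals d(z,0)^{-2N-(2+2γ)l} in absolute value. -/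
open MeasureTheory Real

noncomputable section

variable {N l : ℕ}

namespace KelvinAux

open ContinuousLinearMap

variable {N l : ℕ}

local notation "EE" => (Fin N → ℝ) × (Fin l → ℝ)

lemma nsq_nonneg {n : ℕ} (x : Fin n → ℝ) : 0 ≤ nsq x :=
  Finset.sum_nonneg fun _ _ => sq_nonneg _

lemma nsq_eq_zero {n : ℕ} {x : Fin n → ℝ} : nsq x = 0 ↔ x = 0 := by
  constructor
  · intro h
    funext i
    have := (Finset.sum_eq_zero_iff_of_nonneg (fun i _ => sq_nonneg (x i))).1 h i
      (Finset.mem_univ i)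
    simpa using pow_eq_zero_iff two_ne_zero |>.1 this
  · intro h; simp [h, nsq]

lemma nsq_pos {n : ℕ} {x : Fin n → ℝ} (hx : x ≠ 0) : 0 < nsq x :=
  lt_of_le_of_ne (nsq_nonneg x) fun h => hx (nsq_eq_zero.1 h.symm)

/-- `G(z) = d(z,0)^{2+2γ}`. -/
def GG (γ : ℝ) (z : EE) : ℝ := 1 / (1 + γ) ^ 2 * nsq z.1 ^ (1 + γ) + nsq z.2

lemma GG_nonneg {γ : ℝ} (hγ : 0 ≤ γ) (z : EE) : 0 ≤ GG γ z := by
  have h1 : (0:ℝ) < 1 + γ := by linarith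
  exact add_nonneg (mul_nonneg (by positivity)
    (Real.rpow_nonneg (nsq_nonneg _) _)) (nsq_nonneg _)

lemma GG_pos {γ : ℝ} (hγ : 0 ≤ γ) {z : EE} (hz : z ≠ 0) : 0 < GG γ z := by
  have h1 : (0:ℝ) < 1 + γ := by linarith
  have hc : (0:ℝ) < 1 / (1 + γ) ^ 2 := by positivity
  have : z.1 ≠ 0 ∨ z.2 ≠ 0 := by
    by_contra h
    push_neg at h
    exact hz (Prod.ext h.1 h.2)
  rcases this with hx | hy
  · exact add_pos_of_pos_of_nonneg
      (mul_pos hc (Real.rpow_pos_of_pos (nsq_pos hx) _)) (nsq_nonneg _)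
  · exact add_pos_of_nonneg_of_pos
      (mul_nonneg hc.le (Real.rpow_nonneg (nsq_nonneg _) _)) (nsq_pos hy)

lemma gd_def (γ : ℝ) (z : EE) : gd γ z = GG γ z ^ (1 / (2 + 2 * γ)) := rfl

lemma gd_sq {γ : ℝ} (hγ : 0 ≤ γ) (z : EE) :
    gd γ z ^ 2 = GG γ z ^ ((1 + γ)⁻¹) := by
  have h1 : (1:ℝ) + γ ≠ 0 := by linarith
  have h2 : (2:ℝ) + 2 * γ ≠ 0 := by linarith
  rw [gd_def, ← Real.rpow_natCast (GG γ z ^ (1 / (2 + 2 * γ))) 2,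
    ← Real.rpow_mul (GG_nonneg hγ z)]
  congr 1
  field_simp
  ring

lemma gd_rpow {γ : ℝ} (hγ : 0 ≤ γ) (z : EE) :
    gd γ z ^ (2 + 2 * γ) = GG γ z := by
  have h2 : (2:ℝ) + 2 * γ ≠ 0 := by linarith
  rw [gd_def, ← Real.rpow_mul (GG_nonneg hγ z), one_div_mul_cancel h2, Real.rpow_one]

lemma ginv_eq {γ : ℝ} (hγ : 0 ≤ γ) (z : EE) :
    ginv γ z = (fun i => z.1 i * GG γ z ^ (-(1 + γ)⁻¹),
      fun j => z.2 j * (GG γ z)⁻¹) := by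
  unfold ginv
  rw [gd_sq hγ, gd_rpow hγ, Real.rpow_neg (GG_nonneg hγ z)]
  simp [div_eq_mul_inv]

def lin1 (i : Fin N) : EE →L[ℝ] ℝ :=
  (ContinuousLinearMap.proj i).comp (ContinuousLinearMap.fst ℝ (Fin N → ℝ) (Fin l → ℝ))

def lin2 (j : Fin l) : EE →L[ℝ] ℝ :=
  (ContinuousLinearMap.proj j).comp (ContinuousLinearMap.snd ℝ (Fin N → ℝ) (Fin l → ℝ))

@[simp] lemma lin1_apply (i : Fin N) (w : EE) : lin1 (l := l) i w = w.1 i := rfl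
@[simp] lemma lin2_apply (j : Fin l) (w : EE) : lin2 (N := N) j w = w.2 j := rfl

/-- the differential of `GG γ` -/
def DGG (γ : ℝ) (z : EE) : EE →L[ℝ] ℝ :=
  ∑ k, (2 / (1 + γ) * nsq z.1 ^ γ * z.1 k) • lin1 k
    + ∑ j, (2 * z.2 j) • lin2 j

lemma DGG_apply (γ : ℝ) (z w : EE) :
    DGG γ z w = ∑ k, 2 / (1 + γ) * nsq z.1 ^ γ * z.1 k * w.1 k
      + ∑ j, 2 * z.2 j * w.2 j := by
  simp [DGG, smul_eq_mul]

lemma hasFDerivAt_GG {γ : ℝ} (hγ : 0 ≤ γ) (z : EE) :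
    HasFDerivAt (GG γ) (DGG γ z) z := by
  have h1 : (1:ℝ) + γ ≠ 0 := by linarith
  have hx : HasFDerivAt (fun w : EE => nsq w.1)
      (∑ k : Fin N, (2 * z.1 k) • lin1 (l := l) k) z := by
    have h : ∀ k : Fin N, HasFDerivAt (fun w : EE => w.1 k * w.1 k)
        ((2 * z.1 k) • lin1 (l := l) k) z := fun k =>
      (((lin1 k).hasFDerivAt).mul ((lin1 k).hasFDerivAt)).congr_fderiv
        (ContinuousLinearMap.ext fun w => by simp [smul_eq_mul]; ring)
    have h2 := HasFDerivAt.fun_sum (u := Finset.univ) (fun k _ => h k)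
    simpa only [nsq, pow_two] using h2
  have hy : HasFDerivAt (fun w : EE => nsq w.2)
      (∑ j : Fin l, (2 * z.2 j) • lin2 (N := N) j) z := by
    have h : ∀ j : Fin l, HasFDerivAt (fun w : EE => w.2 j * w.2 j)
        ((2 * z.2 j) • lin2 (N := N) j) z := fun j =>
      (((lin2 j).hasFDerivAt).mul ((lin2 j).hasFDerivAt)).congr_fderiv
        (ContinuousLinearMap.ext fun w => by simp [smul_eq_mul]; ring)
    have h2 := HasFDerivAt.fun_sum (u := Finset.univ) (fun j _ => h j)
    simpa only [nsq, pow_two] using h2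
  have hrp : HasDerivAt (fun s : ℝ => s ^ (1 + γ)) ((1 + γ) * nsq z.1 ^ γ) (nsq z.1) := by
    have := Real.hasDerivAt_rpow_const (x := nsq z.1) (p := 1 + γ) (Or.inr (by linarith))
    simpa only [add_sub_cancel_left] using this
  have hcand := ((hrp.comp_hasFDerivAt z hx).const_mul (1 / (1 + γ) ^ 2)).add hy
  refine hcand.congr_fderiv (ContinuousLinearMap.ext fun w => ?_)
  simp only [ContinuousLinearMap.add_apply, ContinuousLinearMap.smul_apply,
    ContinuousLinearMap.coe_sum', Finset.sum_apply, lin1_apply, lin2_apply,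
    smul_eq_mul, DGG]
  congr 1
  rw [← mul_assoc, Finset.mul_sum]
  refine Finset.sum_congr rfl fun k _ => ?_
  field_simp

/-- the differential of `ginv γ` -/
def Dginv (γ : ℝ) (z : EE) : EE →L[ℝ] EE :=
  (ContinuousLinearMap.pi fun i =>
      z.1 i • ((-(1 + γ)⁻¹ * GG γ z ^ (-(1 + γ)⁻¹ - 1)) • DGG γ z)
        + GG γ z ^ (-(1 + γ)⁻¹) • lin1 i).prod
  (ContinuousLinearMap.pi fun j =>
      z.2 j • ((-(GG γ z ^ 2)⁻¹) • DGG γ z) + (GG γ z)⁻¹ • lin2 j)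

lemma hasFDerivAt_ginv {γ : ℝ} (hγ : 0 ≤ γ) {z : EE} (hz : z ≠ 0) :
    HasFDerivAt (ginv γ) (Dginv γ z) z := by
  have ht := GG_pos hγ hz
  have hfun : ginv γ = fun w : EE =>
      ((fun i => w.1 i * GG γ w ^ (-(1 + γ)⁻¹)) , (fun j => w.2 j * (GG γ w)⁻¹)) :=
    funext fun w => ginv_eq hγ w
  rw [hfun]
  have hG := hasFDerivAt_GG (γ := γ) hγ z
  unfold Dginv
  refine HasFDerivAt.prodMk ?_ ?_
  · refine hasFDerivAt_pi.2 fun i => ?_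
    have hp : HasDerivAt (fun s : ℝ => s ^ (-(1 + γ)⁻¹))
        (-(1 + γ)⁻¹ * GG γ z ^ (-(1 + γ)⁻¹ - 1)) (GG γ z) :=
      Real.hasDerivAt_rpow_const (Or.inl ht.ne')
    exact (lin1 i).hasFDerivAt.mul (hp.comp_hasFDerivAt z hG)
  · refine hasFDerivAt_pi.2 fun j => ?_
    exact (lin2 j).hasFDerivAt.mul ((hasDerivAt_inv ht.ne').comp_hasFDerivAt z hG)


set_option maxHeartbeats 2000000 in
lemma det_Dginv {γ : ℝ} (hγ : 0 ≤ γ) {z : EE} (hz : z ≠ 0) :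
    (Dginv γ z).det = -(GG γ z ^ (-((N : ℝ) * (1 + γ)⁻¹ + l))) := by
  classical
  have h1 : (0:ℝ) < 1 + γ := by linarith
  have ht : 0 < GG γ z := GG_pos hγ hz
  set t := GG γ z with htdef
  set bB := (Pi.basisFun ℝ (Fin N)).prod (Pi.basisFun ℝ (Fin l)) with hbB
  set dv : Fin N ⊕ Fin l → ℝ := Sum.elim (fun _ => t ^ (-(1+γ)⁻¹)) (fun _ => t⁻¹) with hdv
  set uv : Fin N ⊕ Fin l → ℝ := Sum.elim
    (fun i => z.1 i * (-(1+γ)⁻¹ * t ^ (-(1+γ)⁻¹ - 1))) (fun j => z.2 j * (-(t^2)⁻¹)) with huv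
  set vv : Fin N ⊕ Fin l → ℝ := Sum.elim
    (fun k => 2/(1+γ) * nsq z.1 ^ γ * z.1 k) (fun j => 2 * z.2 j) with hvv
  have hmat : LinearMap.toMatrix bB bB ((Dginv γ z) : EE →ₗ[ℝ] EE)
      = Matrix.diagonal dv + Matrix.replicateCol Unit uv * Matrix.replicateRow Unit vv := by
    ext i j
    rcases i with i | i <;> rcases j with k | k <;>
      simp [LinearMap.toMatrix_apply, hbB, Dginv, DGG_apply, Matrix.mul_apply,
        Matrix.diagonal_apply, Pi.single_apply, smul_eq_mul, mul_ite,
        Finset.sum_ite_eq, Finset.sum_ite_eq', hdv, huv, hvv] <;>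
      simp only [← htdef] <;> ring
  have hdiag : (Matrix.diagonal dv).det = (t ^ (-(1+γ)⁻¹))^N * (t⁻¹)^l := by
    simp [Matrix.det_diagonal, hdv, Fintype.prod_sum_type]
  have hunit : IsUnit (Matrix.diagonal dv).det := by
    rw [hdiag]
    exact isUnit_iff_ne_zero.2 (ne_of_gt (mul_pos
      (pow_pos (Real.rpow_pos_of_pos ht _) N) (pow_pos (inv_pos.2 ht) l)))
  have hdvne : ∀ i, dv i ≠ 0 := by
    rintro (i | i)
    · exact (Real.rpow_pos_of_pos ht _).ne'
    · exact (inv_pos.2 ht).ne'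
  have hinv : (Matrix.diagonal dv)⁻¹ = Matrix.diagonal (fun i => (dv i)⁻¹) := by
    apply Matrix.inv_eq_right_inv
    rw [Matrix.diagonal_mul_diagonal]
    have : (fun i => dv i * (dv i)⁻¹) = fun _ => (1:ℝ) :=
      funext fun i => mul_inv_cancel₀ (hdvne i)
    rw [this, Matrix.diagonal_one]
  have hcorr : (1 + Matrix.replicateRow Unit vv * (Matrix.diagonal dv)⁻¹ * Matrix.replicateCol Unit uv).det
      = -1 := by
    rw [Matrix.det_unique, hinv]
    simp [Matrix.mul_apply, hinv, Matrix.diagonal_apply, Fintype.sum_sum_type,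
      hdv, huv, hvv, Matrix.one_apply]
    have hA : (t ^ (-(1+γ)⁻¹))⁻¹ * t ^ (-(1+γ)⁻¹ - 1) = t⁻¹ := by
      have he : -(-(1+γ)⁻¹) + (-(1+γ)⁻¹ - 1) = (-1 : ℝ) := by ring
      rw [← Real.rpow_neg ht.le, ← Real.rpow_add ht, he, Real.rpow_neg_one]
    have hB : t * (t ^ 2)⁻¹ = t⁻¹ := by
      field_simp
    have hnsq1 : ∑ x : Fin N, z.1 x ^ 2 = nsq z.1 := rfl
    have hnsq2 : ∑ x : Fin l, z.2 x ^ 2 = nsq z.2 := rfl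
    have hs1 : ∑ x : Fin N, 2 / (1 + γ) * nsq z.1 ^ γ * z.1 x * (t ^ (-(1 + γ)⁻¹))⁻¹ *
          (z.1 x * ((1 + γ)⁻¹ * t ^ (-(1 + γ)⁻¹ - 1)))
        = 2 / ((1+γ)*(1+γ)) * (nsq z.1 ^ γ * nsq z.1) * t⁻¹ := by
      have hterm : ∀ x : Fin N, 2 / (1 + γ) * nsq z.1 ^ γ * z.1 x * (t ^ (-(1 + γ)⁻¹))⁻¹ *
            (z.1 x * ((1 + γ)⁻¹ * t ^ (-(1 + γ)⁻¹ - 1)))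
          = (2 / ((1+γ)*(1+γ)) * nsq z.1 ^ γ *
              ((t ^ (-(1+γ)⁻¹))⁻¹ * t ^ (-(1+γ)⁻¹ - 1))) * z.1 x ^ 2 := fun x => by
        field_simp
      rw [Finset.sum_congr rfl fun x _ => hterm x, ← Finset.mul_sum, hnsq1, hA]
      ring
    have hs2 : ∑ x : Fin l, 2 * z.2 x * t * (z.2 x * (t ^ 2)⁻¹)
        = 2 * nsq z.2 * t⁻¹ := by
      have hterm : ∀ x : Fin l, 2 * z.2 x * t * (z.2 x * (t ^ 2)⁻¹)
          = (2 * (t * (t ^ 2)⁻¹)) * z.2 x ^ 2 := fun x => by ring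
      rw [Finset.sum_congr rfl fun x _ => hterm x, ← Finset.mul_sum, hnsq2, hB]
      ring
    rw [hs1, hs2]
    have hsγ : nsq z.1 ^ γ * nsq z.1 = nsq z.1 ^ (1+γ) := by
      rw [show (1:ℝ)+γ = γ+1 by ring,
        Real.rpow_add' (nsq_nonneg z.1) (by linarith : γ + (1:ℝ) ≠ 0), Real.rpow_one]
    rw [hsγ]
    have htG : t = 1/(1+γ)^2 * nsq z.1 ^ (1+γ) + nsq z.2 := htdef
    have hmic : t * t⁻¹ = 1 := mul_inv_cancel₀ ht.ne'
    have h1ne : (1:ℝ) + γ ≠ 0 := h1.ne'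
    linear_combination (2 * t⁻¹) * htG - 2 * hmic
  have hdet2 : (Dginv γ z).det = (Matrix.diagonal dv).det *
      (1 + Matrix.replicateRow Unit vv * (Matrix.diagonal dv)⁻¹ * Matrix.replicateCol Unit uv).det := by
    rw [show (Dginv γ z).det = LinearMap.det ((Dginv γ z) : EE →ₗ[ℝ] EE) from rfl,
      ← LinearMap.det_toMatrix bB, hmat, Matrix.det_add_replicateCol_mul_replicateRow hunit]
  rw [hdet2, hcorr, hdiag]
  have hN : (t ^ (-(1+γ)⁻¹))^N = t ^ (-(1+γ)⁻¹ * N) := by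
    rw [← Real.rpow_natCast (t ^ (-(1+γ)⁻¹)) N, ← Real.rpow_mul ht.le]
  have hl2 : (t⁻¹)^l = t ^ (-(l:ℝ)) := by
    rw [inv_pow, ← Real.rpow_natCast t l, ← Real.rpow_neg ht.le]
  rw [hN, hl2, ← Real.rpow_add ht, mul_neg_one]
  congr 1
  ring


lemma nsq_mul {n : ℕ} (x : Fin n → ℝ) (c : ℝ) :
    nsq (fun i => x i * c) = nsq x * c ^ 2 := by
  unfold nsq
  rw [Finset.sum_mul]
  exact Finset.sum_congr rfl fun i _ => by ring

lemma GG_ginv {γ : ℝ} (hγ : 0 ≤ γ) {z : EE} (hz : z ≠ 0) :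
    GG γ (ginv γ z) = (GG γ z)⁻¹ := by
  have h1 : (0:ℝ) < 1 + γ := by linarith
  have ht : 0 < GG γ z := GG_pos hγ hz
  set t := GG γ z with htdef
  rw [ginv_eq hγ]
  show 1 / (1 + γ) ^ 2 * nsq (fun i => z.1 i * t ^ (-(1+γ)⁻¹)) ^ (1 + γ)
      + nsq (fun j => z.2 j * t⁻¹) = t⁻¹
  rw [nsq_mul, nsq_mul,
    Real.mul_rpow (nsq_nonneg z.1) (sq_nonneg _)]
  have hp1 : ((t ^ (-(1+γ)⁻¹)) ^ 2) ^ (1 + γ) = t ^ (-2 : ℝ) := by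
    rw [← Real.rpow_natCast (t ^ (-(1+γ)⁻¹)) 2, ← Real.rpow_mul ht.le,
      ← Real.rpow_mul ht.le]
    congr 1
    push_cast
    field_simp
  have hp2 : (t⁻¹) ^ 2 = t ^ (-2 : ℝ) := by
    rw [inv_pow, ← Real.rpow_natCast t 2, ← Real.rpow_neg ht.le]
    norm_num
  rw [hp1, hp2]
  have hG : 1 / (1 + γ) ^ 2 * nsq z.1 ^ (1 + γ) + nsq z.2 = t := rfl
  have hfin : t * t ^ (-2 : ℝ) = t⁻¹ := by
    nth_rewrite 1 [← Real.rpow_one t]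
    rw [← Real.rpow_add ht]
    norm_num [Real.rpow_neg_one]
  calc 1 / (1 + γ) ^ 2 * (nsq z.1 ^ (1 + γ) * t ^ (-2:ℝ)) + nsq z.2 * t ^ (-2:ℝ)
      = (1 / (1 + γ) ^ 2 * nsq z.1 ^ (1 + γ) + nsq z.2) * t ^ (-2:ℝ) := by ring
    _ = t * t ^ (-2:ℝ) := by rw [hG]
    _ = t⁻¹ := hfin

lemma ginv_ginv {γ : ℝ} (hγ : 0 ≤ γ) {z : EE} (hz : z ≠ 0) :
    ginv γ (ginv γ z) = z := by
  have ht : 0 < GG γ z := GG_pos hγ hz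
  have h1 : (ginv γ z).1 = fun i => z.1 i * GG γ z ^ (-(1+γ)⁻¹) := by rw [ginv_eq hγ]
  have h2 : (ginv γ z).2 = fun j => z.2 j * (GG γ z)⁻¹ := by rw [ginv_eq hγ]
  rw [ginv_eq hγ (ginv γ z), GG_ginv hγ hz, h1, h2]
  refine Prod.ext (funext fun i => ?_) (funext fun j => ?_)
  · show z.1 i * GG γ z ^ (-(1+γ)⁻¹) * ((GG γ z)⁻¹) ^ (-(1+γ)⁻¹) = z.1 i
    rw [Real.inv_rpow ht.le, mul_assoc,
      mul_inv_cancel₀ (Real.rpow_pos_of_pos ht _).ne', mul_one]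
  · show z.2 j * (GG γ z)⁻¹ * ((GG γ z)⁻¹)⁻¹ = z.2 j
    rw [inv_inv, mul_assoc, inv_mul_cancel₀ ht.ne', mul_one]

lemma ginv_zero {γ : ℝ} (hγ : 0 ≤ γ) : ginv γ (0 : EE) = 0 := by
  rw [ginv_eq hγ]
  refine Prod.ext (funext fun i => ?_) (funext fun j => ?_) <;> simp

lemma ginv_ne_zero {γ : ℝ} (hγ : 0 ≤ γ) {z : EE} (hz : z ≠ 0) : ginv γ z ≠ 0 := by
  intro h
  apply hz
  rw [← ginv_ginv hγ hz, h, ginv_zero hγ]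


lemma integrand_eq {γ : ℝ} (hγ : 0 ≤ γ) (hdim : 3 ≤ N + l) {z : EE} (hz : z ≠ 0)
    (u : EE → ℝ) :
    |gd γ (ginv γ z) ^ (((N : ℝ) + (1 + γ) * l) - 2) * u (ginv γ z)| ^
        (2 * ((N : ℝ) + (1 + γ) * l) / (((N : ℝ) + (1 + γ) * l) - 2))
      = |(Dginv γ z).det| *
        |u (ginv γ z)| ^ (2 * ((N : ℝ) + (1 + γ) * l) / (((N : ℝ) + (1 + γ) * l) - 2)) := by
  have h1 : (0:ℝ) < 1 + γ := by linarith
  have ht : 0 < GG γ z := GG_pos hγ hz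
  set t := GG γ z with htdef
  set NN : ℝ := (N : ℝ) + (1 + γ) * l with hNN
  have hNl : (3:ℝ) ≤ (N:ℝ) + l := by exact_mod_cast hdim
  have hNN3 : (3:ℝ) ≤ NN := by
    have hll : (l:ℝ) ≤ (1+γ) * l := by nlinarith [(Nat.cast_nonneg l : (0:ℝ) ≤ (l:ℝ))]
    rw [hNN]; linarith
  have hNN2 : NN - 2 ≠ 0 := by linarith
  have h2γ : (2:ℝ) + 2 * γ ≠ 0 := by linarith
  have hgdi : gd γ (ginv γ z) = t ^ (-(1 / (2 + 2 * γ))) := by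
    rw [gd_def, GG_ginv hγ hz, Real.inv_rpow ht.le, ← Real.rpow_neg ht.le]
  rw [hgdi, ← Real.rpow_mul ht.le, abs_mul,
    abs_of_pos (Real.rpow_pos_of_pos ht _),
    Real.mul_rpow (Real.rpow_pos_of_pos ht _).le (abs_nonneg _),
    ← Real.rpow_mul ht.le, det_Dginv hγ hz, abs_neg,
    abs_of_pos (Real.rpow_pos_of_pos ht _)]
  congr 1
  have hstep : -(1 / (2 + 2 * γ)) * (NN - 2) * (2 * NN / (NN - 2)) = -(NN / (1 + γ)) := by
    field_simp
  rw [hstep, hNN]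
  field_simp

open KelvinAux in
lemma vol_zero_singleton (hdim : 3 ≤ N + l) :
    (volume : Measure EE) ({(0 : EE)} : Set EE) = 0 := by
  have hsing : ∀ (n : ℕ), 1 ≤ n → (volume : Measure (Fin n → ℝ)) {0} = 0 := by
    intro n hn
    have h : ({(0 : Fin n → ℝ)} : Set _) = Set.pi Set.univ (fun _ => ({0} : Set ℝ)) := by
      ext x
      simp [funext_iff, Set.mem_pi]
    rw [h, volume_pi_pi]
    simp [Real.volume_singleton, zero_pow (by omega : n ≠ 0)]
  rw [show ({(0 : EE)} : Set EE) = ({0} : Set (Fin N → ℝ)) ×ˢ ({0} : Set (Fin l → ℝ)) by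
    rw [Set.singleton_prod_singleton]; rfl, Measure.volume_eq_prod, Measure.prod_prod]
  rcases (by omega : 1 ≤ N ∨ 1 ≤ l) with h | h
  · rw [hsing N h, zero_mul]
  · rw [hsing l h, mul_zero]

end KelvinAux


open KelvinAux in
/-- invariance of the critical Lebesgue norm under the Kelvin
transform: `∫|w|^{2*_γ} = ∫|u|^{2*_γ}` where `2*_γ = 2N_γ/(N_γ-2)` and
`w(z̃) = d(z,0)^{N_γ-2} u(z)`, `z = ginv γ z̃`. -/
theorem kelvin_critical_norm_invariant (γ : ℝ) (hγ : 0 ≤ γ) (hdim : 3 ≤ N + l)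
    (u : (Fin N → ℝ) × (Fin l → ℝ) → ℝ) (hu : Measurable u)
    (hint : Integrable (fun z : (Fin N → ℝ) × (Fin l → ℝ) =>
      |u z| ^ (2 * ((N : ℝ) + (1 + γ) * l) / (((N : ℝ) + (1 + γ) * l) - 2)))) :
    (∫ z : (Fin N → ℝ) × (Fin l → ℝ),
        |gd γ (ginv γ z) ^ (((N : ℝ) + (1 + γ) * l) - 2) * u (ginv γ z)| ^
          (2 * ((N : ℝ) + (1 + γ) * l) / (((N : ℝ) + (1 + γ) * l) - 2)))
      = ∫ z : (Fin N → ℝ) × (Fin l → ℝ),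
          |u z| ^ (2 * ((N : ℝ) + (1 + γ) * l) / (((N : ℝ) + (1 + γ) * l) - 2)) := by
  classical
  have hs : MeasurableSet ({(0 : (Fin N → ℝ) × (Fin l → ℝ))}ᶜ) :=
    (measurableSet_singleton _).compl
  have h0 := vol_zero_singleton (N := N) (l := l) hdim
  have hfull : ({(0 : (Fin N → ℝ) × (Fin l → ℝ))}ᶜ : Set _) =ᵐ[volume] Set.univ := by
    rw [MeasureTheory.ae_eq_univ, compl_compl]
    exact h0
  have hinj : Set.InjOn (ginv γ) ({(0 : (Fin N → ℝ) × (Fin l → ℝ))}ᶜ) := by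
    intro p hp q hq h
    rw [← ginv_ginv hγ (Set.mem_compl_singleton_iff.1 hp), h,
      ginv_ginv hγ (Set.mem_compl_singleton_iff.1 hq)]
  have himg : ginv γ '' ({(0 : (Fin N → ℝ) × (Fin l → ℝ))}ᶜ)
      = ({(0 : (Fin N → ℝ) × (Fin l → ℝ))}ᶜ) := by
    apply Set.Subset.antisymm
    · rintro w ⟨p, hp, rfl⟩
      exact Set.mem_compl_singleton_iff.2
        (ginv_ne_zero hγ (Set.mem_compl_singleton_iff.1 hp))
    · intro w hw
      have hw' := Set.mem_compl_singleton_iff.1 hw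
      exact ⟨ginv γ w, Set.mem_compl_singleton_iff.2 (ginv_ne_zero hγ hw'),
        ginv_ginv hγ hw'⟩
  haveI : (volume : Measure ((Fin N → ℝ) × (Fin l → ℝ))).IsAddHaarMeasure := by
    rw [Measure.volume_eq_prod]
    exact Measure.prod.instIsAddHaarMeasure _ _
  have key := integral_image_eq_integral_abs_det_fderiv_smul (μ := volume) hs
      (fun x hx =>
        (hasFDerivAt_ginv hγ (Set.mem_compl_singleton_iff.1 hx)).hasFDerivWithinAt)
      hinj
      (fun z => |u z| ^ (2 * ((N : ℝ) + (1 + γ) * l) / (((N : ℝ) + (1 + γ) * l) - 2)))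
  rw [himg] at key
  calc (∫ z : (Fin N → ℝ) × (Fin l → ℝ),
        |gd γ (ginv γ z) ^ (((N : ℝ) + (1 + γ) * l) - 2) * u (ginv γ z)| ^
          (2 * ((N : ℝ) + (1 + γ) * l) / (((N : ℝ) + (1 + γ) * l) - 2)))
      = ∫ z in ({(0 : (Fin N → ℝ) × (Fin l → ℝ))}ᶜ),
          |gd γ (ginv γ z) ^ (((N : ℝ) + (1 + γ) * l) - 2) * u (ginv γ z)| ^
            (2 * ((N : ℝ) + (1 + γ) * l) / (((N : ℝ) + (1 + γ) * l) - 2)) := by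
        rw [setIntegral_congr_set hfull, setIntegral_univ]
    _ = ∫ z in ({(0 : (Fin N → ℝ) × (Fin l → ℝ))}ᶜ),
          |(Dginv γ z).det| •
            (|u (ginv γ z)| ^
              (2 * ((N : ℝ) + (1 + γ) * l) / (((N : ℝ) + (1 + γ) * l) - 2))) := by
        refine setIntegral_congr_fun hs fun z hz => ?_
        rw [integrand_eq hγ hdim (Set.mem_compl_singleton_iff.1 hz) u, smul_eq_mul]
    _ = ∫ z in ({(0 : (Fin N → ℝ) × (Fin l → ℝ))}ᶜ),
          |u z| ^ (2 * ((N : ℝ) + (1 + γ) * l) / (((N : ℝ) + (1 + γ) * l) - 2)) :=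
        key.symm
    _ = ∫ z : (Fin N → ℝ) × (Fin l → ℝ),
          |u z| ^ (2 * ((N : ℝ) + (1 + γ) * l) / (((N : ℝ) + (1 + γ) * l) - 2)) := by
        rw [setIntegral_congr_set hfull, setIntegral_univ]
end
end
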